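/- Commutator of ∂_x³ with the lowering operator: let g ∈ H(T^∞_ρ × T_ρ) and define G := π_0^⊥ g(φ,x) ∂_x^{-1} (the operator of multiplication by g followed by anti-derivative, projected off the zero x-mode). Then [∂_x³, G] = 3 g_x ∂_x + R, where R := π_0^⊥(3 g_xx + g_xxx ∂_x^{-1}) − 3 π_0(g_x ∂_x), and for any 0 < ζ < ρ the remainder satisfies ‖R‖_{ρ−ζ} ≤ C ζ^{-3} |g|_ρ. -/
import Mathlib


open scoped BigOperators ENNReal Classical

noncomputable def wnorm (η : ℝ) (ℓ : ℕ →₀ ℤ) : ℝ :=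
  ∑ i ∈ ℓ.support, ((i : ℝ) + 1) ^ η * |(ℓ i : ℝ)|

noncomputable def wt (η σ : ℝ) (p : (ℕ →₀ ℤ) × ℤ) : ℝ :=
  Real.exp (σ * (wnorm η p.1 + |(p.2 : ℝ)|))

noncomputable def opNormE (σ m : ℝ) (R : ℤ → ℤ → ℂ) : ℝ≥0∞ :=
  ⨆ j' : ℤ, ∑' j : ℤ, ENNReal.ofReal
    (Real.exp (σ * |(j : ℝ) - (j' : ℝ)|) * ‖R j j'‖ *
      (max 1 |(j' : ℝ)|) ^ (-m))

noncomputable def mapNormE (η σ m : ℝ) (T : (ℕ →₀ ℤ) → ℤ → ℤ → ℂ) : ℝ≥0∞ :=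
  ∑' ℓ : ℕ →₀ ℤ, ENNReal.ofReal (Real.exp (σ * wnorm η ℓ)) * opNormE σ m (T ℓ)

/-- matrix of the operator `G = π₀^⊥ g ∂_x^{-1}` on zero-average functions,
from the Fourier coefficients `gc` of g. -/
noncomputable def Gmat (gc : (ℕ →₀ ℤ) × ℤ → ℂ) : (ℕ →₀ ℤ) → ℤ → ℤ → ℂ :=
  fun ℓ j j' =>
    if j ≠ 0 ∧ j' ≠ 0 then gc (ℓ, j - j') * (Complex.I * (j' : ℂ))⁻¹ else 0

/-- matrix of the remainder `R = π₀^⊥(3 g_xx + g_xxx ∂_x^{-1}) − 3π₀(g_x ∂_x)`,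
as an operator on zero-average functions. -/
noncomputable def Rmat (gc : (ℕ →₀ ℤ) × ℤ → ℂ) : (ℕ →₀ ℤ) → ℤ → ℤ → ℂ :=
  fun ℓ j j' =>
    if j ≠ 0 ∧ j' ≠ 0 then
      3 * (Complex.I * ((j : ℂ) - (j' : ℂ))) ^ 2 * gc (ℓ, j - j') +
        (Complex.I * ((j : ℂ) - (j' : ℂ))) ^ 3 * gc (ℓ, j - j') *
          (Complex.I * (j' : ℂ))⁻¹
    else 0

lemma cube_le_exp (t : ℝ) (ht : 0 ≤ t) : t ^ 3 ≤ 27 * Real.exp t := by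
  have h : t / 3 ≤ Real.exp (t / 3) := le_trans (by linarith) (Real.add_one_le_exp _)
  have h2 := pow_le_pow_left₀ (by positivity : (0:ℝ) ≤ t / 3) h 3
  have h3 : Real.exp (t / 3) ^ 3 = Real.exp t := by
    rw [← Real.exp_nat_mul]; congr 1; push_cast; ring
  nlinarith [h2, h3]

lemma wnorm_nonneg' (η : ℝ) (ℓ : ℕ →₀ ℤ) : 0 ≤ wnorm η ℓ :=
  Finset.sum_nonneg fun i _ =>
    mul_nonneg (Real.rpow_nonneg (by positivity) _) (abs_nonneg _)

lemma key_bound (ρ ζ : ℝ) (hζ : 0 < ζ) (gc : (ℕ →₀ ℤ) × ℤ → ℂ)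
    (ℓ : ℕ →₀ ℤ) (j j' : ℤ) :
    Real.exp ((ρ - ζ) * |(j : ℝ) - (j' : ℝ)|) * ‖Rmat gc ℓ j j'‖ ≤
      108 / ζ ^ 3 * (Real.exp (ρ * |(j : ℝ) - (j' : ℝ)|) * ‖gc (ℓ, j - j')‖) := by
  by_cases hcase : j ≠ 0 ∧ j' ≠ 0
  · by_cases hd : j = j'
    · have hz : Rmat gc ℓ j j' = 0 := by
        simp [Rmat, hcase, hd]
      rw [hz, norm_zero, mul_zero]
      positivity
    · set x : ℝ := |(j : ℝ) - (j' : ℝ)| with hxdef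
      have hx0 : (0:ℝ) ≤ x := abs_nonneg _
      have hx1 : (1:ℝ) ≤ x := by
        have h1 : (1:ℤ) ≤ |j - j'| := Int.one_le_abs (sub_ne_zero.2 hd)
        have : ((1:ℤ):ℝ) ≤ (|j - j'| : ℝ) := by exact_mod_cast h1
        simpa [hxdef] using this
      have hc : ‖((j : ℂ) - (j' : ℂ))‖ = x := by
        rw [show ((j : ℂ) - (j' : ℂ)) = ((((j : ℝ) - (j' : ℝ)) : ℝ) : ℂ) by push_cast; ring,
          Complex.norm_real, Real.norm_eq_abs, hxdef]
      have hj'1 : (1:ℝ) ≤ |(j' : ℝ)| := by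
        have h1 : (1:ℤ) ≤ |j'| := Int.one_le_abs hcase.2
        exact_mod_cast h1
      have hIj' : ‖Complex.I * (j' : ℂ)‖ = |(j' : ℝ)| := by
        rw [norm_mul, Complex.norm_I, one_mul, Complex.norm_intCast]
      set g : ℂ := gc (ℓ, j - j') with hg
      have hRle : ‖Rmat gc ℓ j j'‖ ≤ (3 * x ^ 2 + x ^ 3) * ‖g‖ := by
        have hR : Rmat gc ℓ j j' =
            3 * (Complex.I * ((j : ℂ) - (j' : ℂ))) ^ 2 * g +
              (Complex.I * ((j : ℂ) - (j' : ℂ))) ^ 3 * g *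
                (Complex.I * (j' : ℂ))⁻¹ := by
          simp only [Rmat, if_pos hcase, hg]
        have h1 : ‖3 * (Complex.I * ((j : ℂ) - (j' : ℂ))) ^ 2 * g‖ = 3 * x ^ 2 * ‖g‖ := by
          rw [norm_mul, norm_mul, norm_pow, norm_mul, Complex.norm_I, one_mul, hc]
          norm_num
        have h2 : ‖(Complex.I * ((j : ℂ) - (j' : ℂ))) ^ 3 * g *
            (Complex.I * (j' : ℂ))⁻¹‖ ≤ x ^ 3 * ‖g‖ := by
          rw [norm_mul, norm_mul, norm_pow, norm_mul, Complex.norm_I, one_mul, hc,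
            norm_inv, hIj']
          have h3 : |(j' : ℝ)|⁻¹ ≤ 1 := by
            rw [inv_le_one_iff₀]; right; exact hj'1
          calc x ^ 3 * ‖g‖ * |(j' : ℝ)|⁻¹ ≤ x ^ 3 * ‖g‖ * 1 := by
                apply mul_le_mul_of_nonneg_left h3; positivity
            _ = x ^ 3 * ‖g‖ := by ring
        calc ‖Rmat gc ℓ j j'‖ ≤ 3 * x ^ 2 * ‖g‖ + x ^ 3 * ‖g‖ := by
              rw [hR]; exact le_trans (norm_add_le _ _) (by rw [h1]; linarith)
          _ = (3 * x ^ 2 + x ^ 3) * ‖g‖ := by ring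
      have hE : Real.exp (-(ζ * x)) * Real.exp (ζ * x) = 1 := by
        rw [← Real.exp_add]; simp
      have hEnn : (0:ℝ) ≤ Real.exp (-(ζ * x)) := Real.exp_nonneg _
      have h1 : Real.exp (-(ζ * x)) * (ζ * x) ^ 3 ≤ 27 := by
        calc Real.exp (-(ζ * x)) * (ζ * x) ^ 3
            ≤ Real.exp (-(ζ * x)) * (27 * Real.exp (ζ * x)) := by
              apply mul_le_mul_of_nonneg_left (cube_le_exp _ (by positivity)) hEnn
          _ = 27 * (Real.exp (-(ζ * x)) * Real.exp (ζ * x)) := by ring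
          _ = 27 := by rw [hE]; ring
      have hb : Real.exp (-(ζ * x)) * (3 * x ^ 2 + x ^ 3) ≤ 108 / ζ ^ 3 := by
        rw [le_div_iff₀ (by positivity : (0:ℝ) < ζ ^ 3)]
        have hx23 : x ^ 2 ≤ x ^ 3 := by nlinarith
        nlinarith [h1, mul_nonneg (mul_nonneg hEnn (by positivity : (0:ℝ) ≤ ζ ^ 3))
          (sub_nonneg.2 hx23)]
      have he : Real.exp ((ρ - ζ) * x) = Real.exp (ρ * x) * Real.exp (-(ζ * x)) := by
        rw [← Real.exp_add]; ring_nf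
      calc Real.exp ((ρ - ζ) * x) * ‖Rmat gc ℓ j j'‖
          ≤ Real.exp ((ρ - ζ) * x) * ((3 * x ^ 2 + x ^ 3) * ‖g‖) := by
            apply mul_le_mul_of_nonneg_left hRle (Real.exp_nonneg _)
        _ = Real.exp (ρ * x) * ‖g‖ * (Real.exp (-(ζ * x)) * (3 * x ^ 2 + x ^ 3)) := by
            rw [he]; ring
        _ ≤ Real.exp (ρ * x) * ‖g‖ * (108 / ζ ^ 3) := by
            apply mul_le_mul_of_nonneg_left hb; positivity
        _ = 108 / ζ ^ 3 * (Real.exp (ρ * x) * ‖g‖) := by ring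
  · have hz : Rmat gc ℓ j j' = 0 := by simp only [Rmat, if_neg hcase]
    rw [hz, norm_zero, mul_zero]
    positivity
/-- commutator of ∂_x³ with the lowering operator:
`[∂_x³, G] = 3 g_x ∂_x + R` (as an identity of matrix elements on the
zero-average modes), and `‖R‖_{ρ−ζ} ≤ C ζ^{-3} |g|_ρ` for 0 < ζ < ρ. -/
theorem commutator_dxxx_lowering :
    ∃ C > (0 : ℝ), ∀ (η ρ : ℝ), 0 < η → 0 < ρ →
      ∀ gc : (ℕ →₀ ℤ) × ℤ → ℂ,
        Summable (fun p => wt η ρ p * ‖gc p‖) →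
        (∀ (ℓ : ℕ →₀ ℤ) (j j' : ℤ), j ≠ 0 → j' ≠ 0 →
          ((Complex.I * (j : ℂ)) ^ 3 - (Complex.I * (j' : ℂ)) ^ 3) *
              Gmat gc ℓ j j' =
            3 * (Complex.I * ((j : ℂ) - (j' : ℂ))) * gc (ℓ, j - j') *
                (Complex.I * (j' : ℂ)) +
              Rmat gc ℓ j j') ∧
        ∀ ζ : ℝ, 0 < ζ → ζ < ρ →
          mapNormE η (ρ - ζ) 0 (Rmat gc) ≤
            ENNReal.ofReal
              (C * ζ ^ (-(3 : ℝ)) * ∑' p : (ℕ →₀ ℤ) × ℤ, wt η ρ p * ‖gc p‖) := by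
  refine ⟨108, by norm_num, fun η ρ hη hρ gc hsum => ⟨?_, ?_⟩⟩
  · intro ℓ j j' hj hj'
    simp only [Gmat, Rmat, if_pos (And.intro hj hj')]
    have h : (Complex.I * (j' : ℂ)) ≠ 0 :=
      mul_ne_zero Complex.I_ne_zero (by exact_mod_cast hj')
    field_simp
    ring
  · intro ζ hζ hζρ
    have hSnn : ∀ p : (ℕ →₀ ℤ) × ℤ, 0 ≤ wt η ρ p * ‖gc p‖ :=
      fun p => mul_nonneg (Real.exp_nonneg _) (norm_nonneg _)
    have hop : ∀ ℓ : ℕ →₀ ℤ, opNormE (ρ - ζ) 0 (Rmat gc ℓ) ≤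
        ENNReal.ofReal (108 / ζ ^ 3) *
          ∑' d : ℤ, ENNReal.ofReal (Real.exp (ρ * |(d : ℝ)|) * ‖gc (ℓ, d)‖) := by
      intro ℓ
      rw [opNormE]
      apply iSup_le
      intro j'
      have hstep : ∀ j : ℤ,
          ENNReal.ofReal (Real.exp ((ρ - ζ) * |(j : ℝ) - (j' : ℝ)|) * ‖Rmat gc ℓ j j'‖ *
            (max 1 |(j' : ℝ)|) ^ (-(0:ℝ))) ≤
          ENNReal.ofReal (108 / ζ ^ 3) *
            ENNReal.ofReal (Real.exp (ρ * |((j - j' : ℤ) : ℝ)|) * ‖gc (ℓ, j - j')‖) := by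
        intro j
        rw [neg_zero, Real.rpow_zero, mul_one,
          ← ENNReal.ofReal_mul (by positivity : (0:ℝ) ≤ 108 / ζ ^ 3)]
        apply ENNReal.ofReal_le_ofReal
        have hcast : |((j - j' : ℤ) : ℝ)| = |(j : ℝ) - (j' : ℝ)| := by push_cast; ring_nf
        rw [hcast]
        exact key_bound ρ ζ hζ gc ℓ j j'
      calc (∑' j : ℤ, ENNReal.ofReal
            (Real.exp ((ρ - ζ) * |(j : ℝ) - (j' : ℝ)|) * ‖Rmat gc ℓ j j'‖ *
              (max 1 |(j' : ℝ)|) ^ (-(0:ℝ))))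
          ≤ ∑' j : ℤ, ENNReal.ofReal (108 / ζ ^ 3) *
              ENNReal.ofReal (Real.exp (ρ * |((j - j' : ℤ) : ℝ)|) * ‖gc (ℓ, j - j')‖) :=
            ENNReal.tsum_le_tsum hstep
        _ = ENNReal.ofReal (108 / ζ ^ 3) *
            ∑' j : ℤ, ENNReal.ofReal (Real.exp (ρ * |((j - j' : ℤ) : ℝ)|) * ‖gc (ℓ, j - j')‖) :=
            ENNReal.tsum_mul_left
        _ = ENNReal.ofReal (108 / ζ ^ 3) *
            ∑' d : ℤ, ENNReal.ofReal (Real.exp (ρ * |(d : ℝ)|) * ‖gc (ℓ, d)‖) := by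
            congr 1
            have := (Equiv.subRight j').tsum_eq
              (fun d : ℤ => ENNReal.ofReal (Real.exp (ρ * |(d : ℝ)|) * ‖gc (ℓ, d)‖))
            simpa using this
    calc mapNormE η (ρ - ζ) 0 (Rmat gc)
        ≤ ∑' ℓ : ℕ →₀ ℤ, ENNReal.ofReal (Real.exp (ρ * wnorm η ℓ)) *
            (ENNReal.ofReal (108 / ζ ^ 3) *
              ∑' d : ℤ, ENNReal.ofReal (Real.exp (ρ * |(d : ℝ)|) * ‖gc (ℓ, d)‖)) := by
          rw [mapNormE]
          apply ENNReal.tsum_le_tsum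
          intro ℓ
          refine mul_le_mul' (ENNReal.ofReal_le_ofReal (Real.exp_le_exp.2 ?_)) (hop ℓ)
          nlinarith [wnorm_nonneg' η ℓ]
      _ = ENNReal.ofReal (108 / ζ ^ 3) *
          ∑' ℓ : ℕ →₀ ℤ, ∑' d : ℤ,
            ENNReal.ofReal (wt η ρ (ℓ, d) * ‖gc (ℓ, d)‖) := by
          rw [← ENNReal.tsum_mul_left]
          apply tsum_congr
          intro ℓ
          have hterm : ∀ d : ℤ, ENNReal.ofReal (Real.exp (ρ * wnorm η ℓ)) *
              ENNReal.ofReal (Real.exp (ρ * |(d : ℝ)|) * ‖gc (ℓ, d)‖) =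
              ENNReal.ofReal (wt η ρ (ℓ, d) * ‖gc (ℓ, d)‖) := by
            intro d
            rw [← ENNReal.ofReal_mul (Real.exp_nonneg _)]
            congr 1
            rw [wt]
            simp only
            rw [mul_add, Real.exp_add]
            ring
          calc ENNReal.ofReal (Real.exp (ρ * wnorm η ℓ)) *
              (ENNReal.ofReal (108 / ζ ^ 3) *
                ∑' d : ℤ, ENNReal.ofReal (Real.exp (ρ * |(d : ℝ)|) * ‖gc (ℓ, d)‖))
              = ENNReal.ofReal (108 / ζ ^ 3) *
                (ENNReal.ofReal (Real.exp (ρ * wnorm η ℓ)) *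
                  ∑' d : ℤ, ENNReal.ofReal (Real.exp (ρ * |(d : ℝ)|) * ‖gc (ℓ, d)‖)) := by
                ring
            _ = ENNReal.ofReal (108 / ζ ^ 3) *
                ∑' d : ℤ, ENNReal.ofReal (Real.exp (ρ * wnorm η ℓ)) *
                  ENNReal.ofReal (Real.exp (ρ * |(d : ℝ)|) * ‖gc (ℓ, d)‖) := by
                rw [ENNReal.tsum_mul_left]
            _ = ENNReal.ofReal (108 / ζ ^ 3) *
                ∑' d : ℤ, ENNReal.ofReal (wt η ρ (ℓ, d) * ‖gc (ℓ, d)‖) := by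
                rw [tsum_congr hterm]
      _ = ENNReal.ofReal (108 / ζ ^ 3) *
          ∑' p : (ℕ →₀ ℤ) × ℤ, ENNReal.ofReal (wt η ρ p * ‖gc p‖) := by
          congr 1
          exact (ENNReal.tsum_prod'
            (f := fun p : (ℕ →₀ ℤ) × ℤ => ENNReal.ofReal (wt η ρ p * ‖gc p‖))).symm
      _ = ENNReal.ofReal (108 / ζ ^ 3) *
          ENNReal.ofReal (∑' p : (ℕ →₀ ℤ) × ℤ, wt η ρ p * ‖gc p‖) := by
          congr 1
          exact (ENNReal.ofReal_tsum_of_nonneg hSnn hsum).symm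
      _ ≤ ENNReal.ofReal
            (108 * ζ ^ (-(3 : ℝ)) * ∑' p : (ℕ →₀ ℤ) × ℤ, wt η ρ p * ‖gc p‖) := by
          rw [← ENNReal.ofReal_mul (by positivity : (0:ℝ) ≤ 108 / ζ ^ 3)]
          apply ENNReal.ofReal_le_ofReal
          have hrw : ζ ^ (-(3 : ℝ)) = (ζ ^ 3)⁻¹ := by
            rw [Real.rpow_neg hζ.le, show ((3:ℝ)) = ((3:ℕ) : ℝ) by norm_num,
              Real.rpow_natCast]
          rw [hrw]
          apply le_of_eq
          ring
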